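/- Let f be a real polynomial of degree n with only real roots, and let λ_j be a root of f of multiplicity r_j. Then λ_j lies in the interval [x_{n-1} − sqrt((n/r_j − 1)(n−1)) |x_{n-1} − x_{n-2}|, x_{n-1} + sqrt((n/r_j − 1)(n−1)) |x_{n-1} − x_{n-2}|], where x_{n-1} is the root of f^{(n-1)} and x_{n-2} a root of f^{(n-2)}. -/

import Mathlib

open Polynomial
open scoped Nat

lemma esymm_one' (s : Multiset ℝ) : s.esymm 1 = s.sum := by
  simp [Multiset.esymm, Multiset.powersetCard_one, Multiset.map_map]

lemma esymm_two_cons (a : ℝ) (s : Multiset ℝ) :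
    (a ::ₘ s).esymm 2 = a * s.sum + s.esymm 2 := by
  rw [Multiset.esymm, show (2:ℕ) = 1 + 1 from rfl, Multiset.powersetCard_cons]
  simp only [Multiset.map_add, Multiset.sum_add, Multiset.map_map]
  rw [add_comm, Multiset.esymm]
  congr 1
  rw [Multiset.powersetCard_one, Multiset.map_map]
  have h1 : Multiset.map ((Multiset.prod ∘ Multiset.cons a) ∘ singleton) s
      = Multiset.map (fun x => a * x) s := Multiset.map_congr rfl (by intro x _; simp)
  rw [h1]
  have := Multiset.sum_map_mul_left (s := s) (a := a) (f := id)
  simpa using this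

lemma newton2 (s : Multiset ℝ) :
    s.sum ^ 2 = (s.map (· ^ 2)).sum + 2 * s.esymm 2 := by
  induction s using Multiset.induction with
  | empty => simp [Multiset.esymm, Multiset.powersetCard_zero_right 1]
  | cons a s ih =>
    rw [Multiset.sum_cons, esymm_two_cons, Multiset.map_cons, Multiset.sum_cons]
    ring_nf
    ring_nf at ih
    linarith

lemma ms_cs (s : Multiset ℝ) :
    s.sum ^ 2 ≤ (Multiset.card s : ℝ) * (s.map (· ^ 2)).sum := by
  induction s using Multiset.induction with
  | empty => simp
  | cons a s ih =>
    rcases eq_or_ne s 0 with rfl | hs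
    · simp
    simp only [Multiset.sum_cons, Multiset.map_cons, Multiset.card_cons]
    push_cast
    have hq : (0:ℝ) ≤ (s.map (· ^ 2)).sum := by
      apply Multiset.sum_nonneg; intro x hx
      obtain ⟨y, _, rfl⟩ := Multiset.mem_map.mp hx
      positivity
    have hc1 : (1:ℝ) ≤ (Multiset.card s : ℝ) := by
      have := Multiset.card_pos.mpr hs
      exact_mod_cast this
    nlinarith [sq_nonneg ((Multiset.card s : ℝ) * a - s.sum), ih, hq, hc1,
      mul_nonneg (sub_nonneg.mpr ih) (le_trans zero_le_one hc1)]

lemma sum_map_shift (s : Multiset ℝ) (e : ℝ) :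
    (s.map fun x => x - e).sum = s.sum - (Multiset.card s : ℝ) * e := by
  induction s using Multiset.induction with
  | empty => simp
  | cons a s ih =>
    simp only [Multiset.map_cons, Multiset.sum_cons, Multiset.card_cons, ih]
    push_cast; ring

lemma sum_map_sq_shift (s : Multiset ℝ) (e : ℝ) :
    (s.map fun x => (x - e) ^ 2).sum
      = (s.map (· ^ 2)).sum - 2 * e * s.sum + (Multiset.card s : ℝ) * e ^ 2 := by
  induction s using Multiset.induction with
  | empty => simp
  | cons a s ih =>
    simp only [Multiset.map_cons, Multiset.sum_cons, Multiset.card_cons, ih]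
    push_cast; ring

set_option maxHeartbeats 1000000

theorem stmt_10 (n rj : ℕ) (hn : 2 ≤ n) (f : ℝ[X]) (hdeg : f.natDegree = n)
    (hreal : f.roots.card = n) (lj : ℝ) (hroot : f.eval lj = 0)
    (hmult : f.rootMultiplicity lj = rj) (hrj : 1 ≤ rj)
    (xn1 : ℝ) (hxn1 : (derivative^[n - 1] f).eval xn1 = 0)
    (xn2 : ℝ) (hxn2 : (derivative^[n - 2] f).eval xn2 = 0) :
    lj ∈ Set.Icc
      (xn1 - Real.sqrt (((n : ℝ) / rj - 1) * ((n : ℝ) - 1)) * |xn1 - xn2|)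
      (xn1 + Real.sqrt (((n : ℝ) / rj - 1) * ((n : ℝ) - 1)) * |xn1 - xn2|) := by
  classical
  obtain ⟨k, rfl⟩ : ∃ k, n = k + 2 := ⟨n - 2, by omega⟩
  have hf0 : f ≠ 0 := fun h => by simp [h] at hdeg
  have hfM0 : C f.leadingCoeff * (f.roots.map fun x => X - C x).prod = f :=
    C_leadingCoeff_mul_prod_multiset_X_sub_C (by rw [hdeg]; exact hreal)
  set a := f.leadingCoeff with ha_def
  have ha : a ≠ 0 := leadingCoeff_ne_zero.mpr hf0
  set M := f.roots with hM_def
  have hcard : Multiset.card M = k + 2 := hreal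
  have hfM : C a * (M.map fun x => X - C x).prod = f := hfM0
  set s1 : ℝ := M.sum with hs1_def
  set s2 : ℝ := M.esymm 2 with hs2_def
  set q : ℝ := (M.map (· ^ 2)).sum with hq_def
  -- coefficients of f
  have hc2 : f.coeff (k + 2) = a := by rw [← hdeg]; exact coeff_natDegree
  have hc1 : f.coeff (k + 1) = -(a * s1) := by
    rw [← hfM, coeff_C_mul,
      Multiset.prod_X_sub_C_coeff M (show k + 1 ≤ Multiset.card M by omega),
      hcard, show k + 2 - (k + 1) = 1 from by omega, esymm_one', ← hs1_def]
    ring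
  have hc0 : f.coeff k = a * s2 := by
    rw [← hfM, coeff_C_mul,
      Multiset.prod_X_sub_C_coeff M (show k ≤ Multiset.card M by omega),
      hcard, show k + 2 - k = 2 from by omega, ← hs2_def]
    ring
  -- descFactorial facts
  have d1 : (k + 2).descFactorial (k + 1) = (k + 2)! := by
    have := Nat.factorial_mul_descFactorial (show k + 1 ≤ k + 2 by omega)
    rw [show k + 2 - (k + 1) = 1 from by omega] at this
    rw [show (1:ℕ)! = 1 from rfl, one_mul] at this
    exact this
  have d2 : (k + 1).descFactorial (k + 1) = (k + 1)! := Nat.descFactorial_self _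
  have d3 : 2 * (k + 2).descFactorial k = (k + 2)! := by
    have := Nat.factorial_mul_descFactorial (show k ≤ k + 2 by omega)
    rw [show k + 2 - k = 2 from by omega] at this
    rw [show (2:ℕ)! = 2 from rfl] at this
    exact this
  have d4 : (k + 1).descFactorial k = (k + 1)! := by
    have := Nat.factorial_mul_descFactorial (show k ≤ k + 1 by omega)
    rw [show k + 1 - k = 1 from by omega] at this
    rw [show (1:ℕ)! = 1 from rfl, one_mul] at this
    exact this
  have d5 : k.descFactorial k = k ! := Nat.descFactorial_self _
  -- linear equation from hxn1
  have hg1deg : (derivative^[k + 1] f).natDegree < 2 := by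
    have := natDegree_iterate_derivative f (k + 1)
    omega
  have e10 : (derivative^[k + 1] f).coeff 0 = ((k + 1)! : ℝ) * (-(a * s1)) := by
    rw [coeff_iterate_derivative, zero_add, d2, hc1, nsmul_eq_mul]
  have e11 : (derivative^[k + 1] f).coeff 1 = ((k + 2)! : ℝ) * a := by
    rw [coeff_iterate_derivative, show 1 + (k + 1) = k + 2 from by omega, d1, hc2, nsmul_eq_mul]
  rw [show k + 2 - 1 = k + 1 from rfl] at hxn1
  rw [eval_eq_sum_range' hg1deg] at hxn1
  simp only [Finset.sum_range_succ, Finset.sum_range_one, pow_zero, pow_one, mul_one,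
    e10, e11] at hxn1
  have hfac1 : ((k + 1)! : ℝ) ≠ 0 := Nat.cast_ne_zero.mpr (Nat.factorial_ne_zero _)
  have hm : s1 = ((k : ℝ) + 2) * xn1 := by
    have h2 : ((k + 2)! : ℝ) = ((k : ℝ) + 2) * ((k + 1)! : ℝ) := by
      rw [show k + 2 = (k + 1) + 1 from rfl, Nat.factorial_succ]; push_cast; ring
    have h3 : ((k + 1)! : ℝ) * a * (((k : ℝ) + 2) * xn1 - s1) = 0 := by
      rw [h2] at hxn1; linear_combination hxn1
    have h4 := (mul_eq_zero.mp h3).resolve_left (mul_ne_zero hfac1 ha)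
    linarith
  -- quadratic equation from hxn2
  have hg2deg : (derivative^[k] f).natDegree < 3 := by
    have := natDegree_iterate_derivative f k
    omega
  have e20 : (derivative^[k] f).coeff 0 = (k ! : ℝ) * (a * s2) := by
    rw [coeff_iterate_derivative, zero_add, d5, hc0, nsmul_eq_mul]
  have e21 : (derivative^[k] f).coeff 1 = ((k + 1)! : ℝ) * (-(a * s1)) := by
    rw [coeff_iterate_derivative, show 1 + k = k + 1 from by omega, d4, hc1, nsmul_eq_mul]
  have e22 : (2 : ℝ) * (derivative^[k] f).coeff 2 = ((k + 2)! : ℝ) * a := by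
    rw [coeff_iterate_derivative, show 2 + k = k + 2 from by omega, hc2, nsmul_eq_mul,
      ← mul_assoc, show ((k + 2)! : ℝ) = ((2 * (k + 2).descFactorial k : ℕ) : ℝ) from by rw [d3]]
    push_cast; ring
  rw [show k + 2 - 2 = k from by omega] at hxn2
  rw [eval_eq_sum_range' hg2deg] at hxn2
  simp only [Finset.sum_range_succ, Finset.sum_range_one, pow_zero, pow_one, mul_one,
    e20, e21] at hxn2
  have hfk : (k ! : ℝ) ≠ 0 := Nat.cast_ne_zero.mpr (Nat.factorial_ne_zero _)
  have hQ : 2 * s2 - 2 * ((k : ℝ) + 1) * s1 * xn2 + ((k : ℝ) + 2) * ((k : ℝ) + 1) * xn2 ^ 2 = 0 := by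
    have hf1 : ((k + 1)! : ℝ) = ((k : ℝ) + 1) * (k ! : ℝ) := by
      rw [Nat.factorial_succ]; push_cast; ring
    have hf2 : ((k + 2)! : ℝ) = ((k : ℝ) + 2) * (((k : ℝ) + 1) * (k ! : ℝ)) := by
      rw [show k + 2 = (k + 1) + 1 from rfl, Nat.factorial_succ, Nat.factorial_succ]
      push_cast; ring
    have h3 : (k ! : ℝ) * a *
        (2 * s2 - 2 * ((k : ℝ) + 1) * s1 * xn2 + ((k : ℝ) + 2) * ((k : ℝ) + 1) * xn2 ^ 2) = 0 := by
      rw [hf1] at hxn2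
      rw [hf2] at e22
      linear_combination 2 * hxn2 - xn2 ^ 2 * e22
    have h4 := (mul_eq_zero.mp h3).resolve_left (mul_ne_zero hfk ha)
    exact h4
  -- Newton & the distance identity
  have hnewton : s1 ^ 2 = q + 2 * s2 := newton2 M
  have hq' : q = s1 ^ 2 - 2 * s2 := by linarith
  have hd : ((k : ℝ) + 2) * q - s1 ^ 2
      = ((k : ℝ) + 1) * ((k : ℝ) + 2) ^ 2 * (xn1 - xn2) ^ 2 := by
    linear_combination ((k : ℝ) + 2) * hq' - ((k : ℝ) + 2) * hQ +
      ((k : ℝ) + 1) * (s1 + ((k : ℝ) + 2) * xn1 - 2 * ((k : ℝ) + 2) * xn2) * hm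
  -- multiplicity decomposition
  have hcount : M.count lj = rj := by rw [hM_def, count_roots]; exact hmult
  have hrle : rj ≤ k + 2 := by
    have := Multiset.count_le_card lj M
    omega
  have hrep : Multiset.replicate rj lj ≤ M :=
    Multiset.le_count_iff_replicate_le.mp (le_of_eq hcount.symm)
  set N := M - Multiset.replicate rj lj with hN_def
  have hMsplit : Multiset.replicate rj lj + N = M := add_tsub_cancel_of_le hrep
  have hcN : rj + Multiset.card N = k + 2 := by
    have := congrArg Multiset.card hMsplit
    simpa [hcard] using this
  set S : ℝ := N.sum with hS_def
  set Q : ℝ := (N.map (· ^ 2)).sum with hQN_def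
  have hs1split : s1 = rj * lj + S := by
    rw [hs1_def, ← hMsplit, Multiset.sum_add, Multiset.sum_replicate, nsmul_eq_mul]
  have hqsplit : q = rj * lj ^ 2 + Q := by
    rw [hq_def, ← hMsplit, Multiset.map_add, Multiset.sum_add, Multiset.map_replicate,
      Multiset.sum_replicate, nsmul_eq_mul]
  -- Cauchy-Schwarz on shifted N
  have hcs := ms_cs (N.map (fun x => x - xn1))
  rw [Multiset.card_map, Multiset.map_map] at hcs
  have hcomp : N.map ((fun y : ℝ => y ^ 2) ∘ fun x => x - xn1)
      = N.map (fun x => (x - xn1) ^ 2) :=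
    Multiset.map_congr rfl (fun x _ => rfl)
  rw [hcomp, sum_map_shift, sum_map_sq_shift] at hcs
  have hu : N.sum = S := rfl
  have hwq : (N.map (· ^ 2)).sum = Q := rfl
  rw [hu, hwq] at hcs
  -- final inequality
  set t : ℝ := lj - xn1 with ht_def
  set c : ℝ := (Multiset.card N : ℝ) with hc_def
  set r : ℝ := (rj : ℝ) with hr_def
  have hrc : r + c = (k : ℝ) + 2 := by rw [hr_def, hc_def]; exact_mod_cast hcN
  have hr0 : (0 : ℝ) < r := by rw [hr_def]; exact_mod_cast hrj
  have hc0 : (0 : ℝ) ≤ c := by rw [hc_def]; positivity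
  set W : ℝ := Q - 2 * xn1 * S + c * xn1 ^ 2 with hW_def
  -- u = -r t
  have huval : S - c * xn1 = -(r * t) := by
    rw [ht_def]
    have : S = s1 - r * lj := by rw [hs1split]; ring
    rw [this, hm]
    have : c = ((k : ℝ) + 2) - r := by linarith
    rw [this]; ring
  rw [huval] at hcs
  rw [show (-(r * t)) ^ 2 = r ^ 2 * t ^ 2 from by ring] at hcs
  have hcs2 : r ^ 2 * t ^ 2 ≤ c * W := hcs
  -- V = r t^2 + W
  have hV : ((k : ℝ) + 2) * (r * t ^ 2 + W)
      = ((k : ℝ) + 1) * ((k : ℝ) + 2) ^ 2 * (xn1 - xn2) ^ 2 := by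
    rw [← hd]
    have hVexp : r * t ^ 2 + W = q - 2 * xn1 * s1 + ((k : ℝ) + 2) * xn1 ^ 2 := by
      rw [hW_def, ht_def, hqsplit, hs1split, ← hrc, hr_def]; ring
    rw [hVexp, hm]; ring
  have target2 : r * (r + c) * t ^ 2 ≤ c * (r * t ^ 2 + W) := by
    have hdiff : c * (r * t ^ 2 + W) - r * (r + c) * t ^ 2 = c * W - r ^ 2 * t ^ 2 := by ring
    linarith [hcs2, hdiff]
  set n' : ℝ := (k : ℝ) + 2 with hn'_def
  have hn0 : (0 : ℝ) < n' := by rw [hn'_def]; positivity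
  have h5 : (t ^ 2 * r) * n' ^ 2 ≤ (c * ((k : ℝ) + 1) * (xn1 - xn2) ^ 2) * n' ^ 2 := by
    calc (t ^ 2 * r) * n' ^ 2 = n' * (r * (r + c) * t ^ 2) := by rw [hrc, hn'_def]; ring
      _ ≤ n' * (c * (r * t ^ 2 + W)) := by
          exact mul_le_mul_of_nonneg_left target2 (le_of_lt hn0)
      _ = c * (n' * (r * t ^ 2 + W)) := by ring
      _ = c * (((k : ℝ) + 1) * n' ^ 2 * (xn1 - xn2) ^ 2) := by rw [hn'_def, hV]
      _ = (c * ((k : ℝ) + 1) * (xn1 - xn2) ^ 2) * n' ^ 2 := by ring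
  have h6 : t ^ 2 * r ≤ c * ((k : ℝ) + 1) * (xn1 - xn2) ^ 2 :=
    le_of_mul_le_mul_right h5 (by positivity)
  have hkey : t ^ 2 ≤ ((n' / r - 1) * (n' - 1)) * (xn1 - xn2) ^ 2 := by
    have hC : n' / r - 1 = c / r := by
      rw [div_sub_one (ne_of_gt hr0)]
      congr 1
      linarith
    rw [hC, div_mul_eq_mul_div, div_mul_eq_mul_div, le_div_iff₀ hr0]
    calc t ^ 2 * r ≤ c * ((k : ℝ) + 1) * (xn1 - xn2) ^ 2 := h6
      _ = c * (n' - 1) * (xn1 - xn2) ^ 2 := by rw [hn'_def]; ring_nf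
  -- wrap up with sqrt
  have hCnn : 0 ≤ (n' / r - 1) * (n' - 1) := by
    have h1 : (1 : ℝ) ≤ n' / r := by
      rw [le_div_iff₀ hr0, one_mul, hn'_def, hr_def]
      exact_mod_cast hrle
    have h2 : (1 : ℝ) ≤ n' := by rw [hn'_def]; linarith [Nat.cast_nonneg (α := ℝ) k]
    apply mul_nonneg <;> linarith
  have habs : |lj - xn1| ≤ Real.sqrt ((n' / r - 1) * (n' - 1)) * |xn1 - xn2| := by
    rw [← Real.sqrt_sq_eq_abs (lj - xn1), ← Real.sqrt_sq_eq_abs (xn1 - xn2),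
      ← Real.sqrt_mul hCnn]
    exact Real.sqrt_le_sqrt hkey
  rw [Set.mem_Icc]
  have hcast : Real.sqrt (((k + 2 : ℕ) : ℝ) / (rj : ℝ) - 1) = Real.sqrt (n' / r - 1) := by
    norm_num [hn'_def, hr_def]
  constructor
  · have := neg_abs_le (lj - xn1)
    push_cast
    rw [show ((k : ℝ) + 2) / (rj : ℝ) - 1 = n' / r - 1 from by rw [hn'_def, hr_def]]
    rw [show ((k : ℝ) + 2) - 1 = n' - 1 from by rw [hn'_def]]
    linarith [habs]
  · have := le_abs_self (lj - xn1)
    push_cast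
    rw [show ((k : ℝ) + 2) / (rj : ℝ) - 1 = n' / r - 1 from by rw [hn'_def, hr_def]]
    rw [show ((k : ℝ) + 2) - 1 = n' - 1 from by rw [hn'_def]]
    linarith [habs]
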